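/- Let a : Fin (n+1) → ℕ be strictly increasing, let N ≥ 1, and suppose the range of a is a Sidon set modulo N. Then the graph S_N(a) contains no cycle of length 4: there do not exist vertices w, x, y, z with w adjacent to x, x adjacent to y, y adjacent to z, z adjacent to w, w ≠ y and x ≠ z. -/

import Mathlib

def IsSidonModSet (N : ℕ) (A : Set ℕ) : Prop :=
  ∀ a ∈ A, ∀ b ∈ A, ∀ c ∈ A, ∀ d ∈ A,
    a + b ≡ c + d [MOD N] → (a = c ∧ b = d) ∨ (a = d ∧ b = c)

def SGraph (n N : ℕ) (a : Fin (n + 1) → ℕ) : SimpleGraph (ZMod (2 * N)) where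
  Adj x y := x ≠ y ∧ ∃ r : Fin (n + 1), ∃ v : ZMod (2 * N), Even v.val ∧
    s(x, y) = s(v, v + (2 * (a r : ZMod (2 * N)) - 1))
  symm := by
    constructor
    rintro x y ⟨hxy, r, v, hv, h⟩
    exact ⟨hxy.symm, r, v, hv, Sym2.eq_swap.trans h⟩
  loopless := by
    constructor
    rintro x ⟨hxx, -⟩
    exact hxx rfl

theorem stmt_3 (n N : ℕ) (hN : 1 ≤ N) (a : Fin (n + 1) → ℕ)
    (ha : StrictMono a) (hS : IsSidonModSet N (Set.range a)) :
    ¬ ∃ w x y z : ZMod (2 * N),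
        (SGraph n N a).Adj w x ∧ (SGraph n N a).Adj x y ∧
        (SGraph n N a).Adj y z ∧ (SGraph n N a).Adj z w ∧
        w ≠ y ∧ x ≠ z := by
  haveI : NeZero (2*N) := ⟨by omega⟩
  set f : ZMod (2*N) →+* ZMod 2 := ZMod.castHom ⟨N, rfl⟩ (ZMod 2) with hfdef
  have hf0 : ∀ v : ZMod (2*N), Even v.val → f v = 0 := by
    intro v hv
    rw [hfdef, ZMod.castHom_apply, ← ZMod.natCast_val,
      ZMod.natCast_eq_zero_iff]
    exact hv.two_dvd
  have hfd : ∀ r : Fin (n+1), f (2*(a r : ZMod (2*N)) - 1) = 1 := by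
    intro r
    rw [map_sub, map_mul, map_natCast, map_one, map_ofNat]
    have h2 : ((2:ZMod 2)) = 0 := rfl
    rw [h2, zero_mul, zero_sub]
    decide
  -- orientation lemma for an edge
  have horient : ∀ {x y : ZMod (2*N)}, (SGraph n N a).Adj x y →
      ∃ r : Fin (n+1),
        (f x = 0 ∧ y = x + (2*(a r : ZMod (2*N)) - 1)) ∨
        (f y = 0 ∧ x = y + (2*(a r : ZMod (2*N)) - 1)) := by
    rintro x y ⟨-, r, v, hv, he⟩
    refine ⟨r, ?_⟩
    rw [Sym2.eq_iff] at he
    rcases he with ⟨h1, h2⟩ | ⟨h1, h2⟩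
    · exact Or.inl ⟨h1 ▸ hf0 v hv, by rw [h1, h2]⟩
    · exact Or.inr ⟨h2 ▸ hf0 v hv, by rw [h1, h2]⟩
  -- Sidon consequence in ZMod (2N)
  have hkey : ∀ r1 r2 r3 r4 : Fin (n+1),
      (2*(a r1 : ZMod (2*N)) - 1) + (2*(a r3 : ZMod (2*N)) - 1)
        = (2*(a r2 : ZMod (2*N)) - 1) + (2*(a r4 : ZMod (2*N)) - 1) →
      (a r1 = a r2 ∧ a r3 = a r4) ∨ (a r1 = a r4 ∧ a r3 = a r2) := by
    intro r1 r2 r3 r4 h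
    have h2 : ((2*(a r1) + 2*(a r3) : ℕ) : ZMod (2*N))
        = ((2*(a r2) + 2*(a r4) : ℕ) : ZMod (2*N)) := by
      push_cast
      linear_combination h
    have h3 : 2*(a r1) + 2*(a r3) ≡ 2*(a r2) + 2*(a r4) [MOD 2*N] :=
      (ZMod.natCast_eq_natCast_iff _ _ _).mp h2
    have h4 : a r1 + a r3 ≡ a r2 + a r4 [MOD N] := by
      have e : ∀ p q : ℕ, 2*(p+q) = 2*p+2*q := fun p q => by ring
      have h3' : 2*(a r1 + a r3) ≡ 2*(a r2 + a r4) [MOD 2*N] := by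
        rw [e, e]; exact h3
      rw [Nat.modEq_iff_dvd] at h3' ⊢
      obtain ⟨k, hk⟩ := h3'
      push_cast at hk ⊢
      exact ⟨k, by linarith⟩
    exact hS _ ⟨r1, rfl⟩ _ ⟨r3, rfl⟩ _ ⟨r2, rfl⟩ _ ⟨r4, rfl⟩ h4
  rintro ⟨w, x, y, z, h1, h2, h3, h4, hwy, hxz⟩
  obtain ⟨r1, o1⟩ := horient h1
  obtain ⟨r2, o2⟩ := horient h2
  obtain ⟨r3, o3⟩ := horient h3
  obtain ⟨r4, o4⟩ := horient h4
  set d1 := 2*(a r1 : ZMod (2*N)) - 1 with hd1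
  set d2 := 2*(a r2 : ZMod (2*N)) - 1 with hd2
  set d3 := 2*(a r3 : ZMod (2*N)) - 1 with hd3
  set d4 := 2*(a r4 : ZMod (2*N)) - 1 with hd4
  have h01 : (0 : ZMod 2) ≠ 1 := by decide
  rcases o1 with ⟨p1, q1⟩ | ⟨p1, q1⟩
  · -- f w = 0, x = w + d1
    have pfx : f x = 1 := by rw [q1, map_add, p1, hfd r1, zero_add]
    rcases o2 with ⟨p2, -⟩ | ⟨p2, q2⟩
    · exact h01 (p2.symm.trans pfx)
    -- f y = 0, x = y + d2
    rcases o3 with ⟨-, q3⟩ | ⟨p3, q3⟩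
    · -- z = y + d3
      have pfz : f z = 1 := by rw [q3, map_add, p2, hfd r3, zero_add]
      rcases o4 with ⟨p4, -⟩ | ⟨-, q4⟩
      · exact h01 (p4.symm.trans pfz)
      · -- z = w + d4
        have hsum : d1 + d3 = d2 + d4 := by
          have e1 : w + d1 = y + d2 := by rw [← q1, ← q2]
          have e2 : y + d3 = w + d4 := by rw [← q3, ← q4]
          linear_combination e1 + e2
        rcases hkey r1 r2 r3 r4 hsum with ⟨ea, -⟩ | ⟨ea, -⟩
        · have hd : d1 = d2 := by rw [hd1, hd2, ea]
          have e : w + d1 = y + d1 := by rw [← q1, q2, hd]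
          exact hwy (add_right_cancel e)
        · have hd : d1 = d4 := by rw [hd1, hd4, ea]
          exact hxz (by rw [q1, hd, ← q4])
    · -- f z = 0, y = z + d3 : then f y = 1, contra f y = 0
      have pfy : f y = 1 := by rw [q3, map_add, p3, hfd r3, zero_add]
      exact h01 (p2.symm.trans pfy)
  · -- f x = 0, w = x + d1
    have pfw : f w = 1 := by rw [q1, map_add, p1, hfd r1, zero_add]
    rcases o2 with ⟨-, q2⟩ | ⟨p2, q2⟩
    · -- y = x + d2
      have pfy : f y = 1 := by rw [q2, map_add, p1, hfd r2, zero_add]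
      rcases o3 with ⟨p3, -⟩ | ⟨p3, q3⟩
      · exact h01 (p3.symm.trans pfy)
      -- f z = 0, y = z + d3
      rcases o4 with ⟨-, q4⟩ | ⟨p4, -⟩
      · -- w = z + d4
        have hsum : d1 + d3 = d2 + d4 := by
          have e1 : x + d1 = z + d4 := by rw [← q1, ← q4]
          have e2 : x + d2 = z + d3 := by rw [← q2, ← q3]
          linear_combination e1 - e2
        rcases hkey r1 r2 r3 r4 hsum with ⟨ea, -⟩ | ⟨ea, -⟩
        · have hd : d1 = d2 := by rw [hd1, hd2, ea]
          exact hwy (by rw [q1, hd, ← q2])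
        · have hd : d1 = d4 := by rw [hd1, hd4, ea]
          have e : x + d1 = z + d1 := by rw [← q1, q4, hd]
          exact hxz (add_right_cancel e)
      · exact h01 (p4.symm.trans pfw)
    · -- f y = 0, x = y + d2 : then f x = 1 contra f x = 0
      have pfx : f x = 1 := by rw [q2, map_add, p2, hfd r2, zero_add]
      exact h01 (p1.symm.trans pfx)
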